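/- Let a < x be reals, 0 < β < 1, and η > -1 with η - β > -1. Then the left Riemann–Liouville fractional derivative of order β of the function t ↦ (t - a)^η evaluated at x equals (Γ(η+1) / Γ(η+1-β)) · (x - a)^(η-β). -/

import Mathlib

open MeasureTheory intervalIntegral

lemma real_beta_eval {u v : ℝ} (hu : 0 < u) (hv : 0 < v) :
    ∫ s in (0:ℝ)..1, s ^ (u - 1) * (1 - s) ^ (v - 1) =
      Real.Gamma u * Real.Gamma v / Real.Gamma (u + v) := by
  have h := Complex.Gamma_mul_Gamma_eq_betaIntegral (s := (u : ℂ)) (t := (v : ℂ))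
    (by simpa using hu) (by simpa using hv)
  have hbeta : Complex.betaIntegral (u : ℂ) (v : ℂ) =
      ((∫ s in (0:ℝ)..1, s ^ (u - 1) * (1 - s) ^ (v - 1) : ℝ) : ℂ) := by
    rw [Complex.betaIntegral, ← intervalIntegral.integral_ofReal]
    refine intervalIntegral.integral_congr fun s hs => ?_
    rw [Set.uIcc_of_le (by norm_num)] at hs
    push_cast
    rw [Complex.ofReal_cpow hs.1, Complex.ofReal_cpow (by linarith [hs.2] : (0:ℝ) ≤ 1 - s)]
    push_cast
    ring
  have hGuv : Real.Gamma (u + v) ≠ 0 := (Real.Gamma_pos_of_pos (by linarith)).ne'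
  have h3 : Real.Gamma u * Real.Gamma v =
      Real.Gamma (u + v) * ∫ s in (0:ℝ)..1, s ^ (u - 1) * (1 - s) ^ (v - 1) := by
    rw [hbeta, ← Complex.ofReal_add, Complex.Gamma_ofReal, Complex.Gamma_ofReal,
      Complex.Gamma_ofReal, ← Complex.ofReal_mul, ← Complex.ofReal_mul] at h
    exact_mod_cast h
  field_simp
  linarith [h3]

lemma rl_integral_eval {a u β η : ℝ} (hau : a < u) (hβ0 : 0 < β) (hβ1 : β < 1)
    (hη : -1 < η) (hηβ : -1 < η - β) :
    (∫ t in a..u, (t - a) ^ η * (u - t) ^ (-β)) =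
      (Real.Gamma (η + 1) * Real.Gamma (1 - β) / Real.Gamma (η + 2 - β)) *
        (u - a) ^ (η + 1 - β) := by
  have hc : u - a ≠ 0 := by linarith
  have h := intervalIntegral.smul_integral_comp_mul_add
    (f := fun t => (t - a) ^ η * (u - t) ^ (-β)) (a := 0) (b := 1) (u - a) a
  simp only [mul_zero, zero_add, mul_one, sub_add_cancel] at h
  rw [← h]
  have heq : ∫ s in (0:ℝ)..1, ((u - a) * s + a - a) ^ η * (u - ((u - a) * s + a)) ^ (-β) =
      ((u - a) ^ η * (u - a) ^ (-β)) * ∫ s in (0:ℝ)..1, s ^ η * (1 - s) ^ (-β) := by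
    rw [← intervalIntegral.integral_const_mul]
    refine intervalIntegral.integral_congr fun s hs => ?_
    rw [Set.uIcc_of_le (by norm_num)] at hs
    have h1 : (u - a) * s + a - a = (u - a) * s := by ring
    have h2 : u - ((u - a) * s + a) = (u - a) * (1 - s) := by ring
    rw [h1, h2, Real.mul_rpow (by linarith) hs.1,
      Real.mul_rpow (by linarith) (by linarith [hs.2])]
    ring
  rw [heq]
  have hb := real_beta_eval (u := η + 1) (v := 1 - β) (by linarith) (by linarith)
  simp only [add_sub_cancel_right] at hb
  have : (1 : ℝ) - β - 1 = -β := by ring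
  rw [this] at hb
  rw [hb]
  rw [smul_eq_mul]
  have h3 : η + 1 + (1 - β) = η + 2 - β := by ring
  rw [h3]
  have h4 : (u - a) ^ (η + 1 - β) = (u - a) * ((u - a) ^ η * (u - a) ^ (-β)) := by
    rw [← Real.rpow_add (by linarith) η (-β), ← Real.rpow_one_add' (by linarith) (by linarith)]
    ring_nf
  rw [h4]; ring

theorem rl_deriv_of_power (a x β η : ℝ) (hax : a < x) (hβ0 : 0 < β) (hβ1 : β < 1)
    (hη : -1 < η) (hηβ : -1 < η - β) :
    deriv (fun u : ℝ =>
        (1 / Real.Gamma (1 - β)) * ∫ t in a..u, (t - a) ^ η * (u - t) ^ (-β)) x =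
      (Real.Gamma (η + 1) / Real.Gamma (η + 1 - β)) * (x - a) ^ (η - β) := by
  set C := (1 / Real.Gamma (1 - β)) *
    (Real.Gamma (η + 1) * Real.Gamma (1 - β) / Real.Gamma (η + 2 - β)) with hC
  have hev : (fun u : ℝ =>
      (1 / Real.Gamma (1 - β)) * ∫ t in a..u, (t - a) ^ η * (u - t) ^ (-β)) =ᶠ[nhds x]
      fun u => C * (u - a) ^ (η + 1 - β) := by
    filter_upwards [isOpen_Ioi.mem_nhds (show x ∈ Set.Ioi a from hax)] with u hu
    rw [rl_integral_eval hu hβ0 hβ1 hη hηβ, hC]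
    ring
  rw [hev.deriv_eq]
  have hd : HasDerivAt (fun u : ℝ => C * (u - a) ^ (η + 1 - β))
      (C * ((η + 1 - β) * (x - a) ^ (η + 1 - β - 1))) x := by
    have h1 : HasDerivAt (fun u : ℝ => u - a) 1 x := (hasDerivAt_id x).sub_const a
    have h2 := (Real.hasDerivAt_rpow_const (x := x - a) (p := η + 1 - β)
      (Or.inl (by linarith))).comp x h1
    simpa using h2.const_mul C
  rw [hd.deriv]
  have hG1 : Real.Gamma (1 - β) ≠ 0 := (Real.Gamma_pos_of_pos (by linarith)).ne'
  have hG2 : Real.Gamma (η + 1 - β) ≠ 0 := (Real.Gamma_pos_of_pos (by linarith)).ne'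
  have hadd : Real.Gamma (η + 2 - β) = (η + 1 - β) * Real.Gamma (η + 1 - β) := by
    have : η + 2 - β = (η + 1 - β) + 1 := by ring
    rw [this, Real.Gamma_add_one (by linarith)]
  have hexp : η + 1 - β - 1 = η - β := by ring
  have hne : η + 1 - β ≠ 0 := by linarith
  have key : C * (η + 1 - β) = Real.Gamma (η + 1) / Real.Gamma (η + 1 - β) := by
    rw [hC, hadd]
    field_simp
  rw [hexp, mul_comm (η + 1 - β) ((x - a) ^ (η - β)), ← mul_assoc, mul_right_comm, key]
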